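/- It is not true in general that the Default Cascades model yields lower final global vulnerability than the acyclic DebtRank model: there exists a 3-bank financial network and a shock such that H^{DC}(∞) > H^{aDR}(∞). Concretely, for the directed 3-cycle with equities E(0) = (5, 15, 25), external assets A^e = (100, 100, 100), interbank assets A^b_{13} = 20, A^b_{21} = 20, A^b_{32} = 15, and a uniform 10% shock on external assets, the DC process ends with all three banks defaulted (h = (1,1,1)) while the aDR process ends with h = (1, 1, 4/5). -/

import Mathlib

open scoped Classical

/-- Counterexample showing DC can exceed aDR: on the directed 3-cycle with
E(0) = (5,15,25), A^e = (100,100,100), A^b_{13}=20, A^b_{21}=20, A^b_{32}=15 and a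
uniform 10% shock, DC ends with h = (1,1,1) while aDR ends with h = (1,1,4/5), so
H^DC(∞) > H^aDR(∞). -/
theorem dc_not_le_adr_counterexample
    (E0 Ae : Fin 3 → ℝ) (hE0 : E0 = ![5, 15, 25]) (hAe : Ae = ![100, 100, 100])
    (Ab : Matrix (Fin 3) (Fin 3) ℝ)
    (hAb : Ab = ![![0, 0, 20], ![20, 0, 0], ![0, 15, 0]])
    (l : Matrix (Fin 3) (Fin 3) ℝ) (hlm : ∀ i j, l i j = Ab i j / E0 i)
    (hDC haDR : ℕ → Fin 3 → ℝ)
    (hDC0 : ∀ i, hDC 0 i = 0) (haDR0 : ∀ i, haDR 0 i = 0)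
    (hDC1 : ∀ i, hDC 1 i = min 1 (Ae i * (1/10) / E0 i))
    (haDR1 : ∀ i, haDR 1 i = min 1 (Ae i * (1/10) / E0 i))
    (hDCupd : ∀ t, 1 ≤ t → ∀ i, hDC (t+1) i =
      min 1 (hDC t i + ∑ j,
        if hDC t j = 1 ∧ (∀ t' < t, hDC t' j < 1) then l i j * hDC t j else 0))
    (haDRupd : ∀ t, 1 ≤ t → ∀ i, haDR (t+1) i =
      min 1 (haDR t i + ∑ j,
        if 0 < haDR t j ∧ (∀ t' < t, haDR t' j = 0) then l i j * haDR t j else 0)) :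
    ∃ T, 1 ≤ T ∧ ∀ t, T ≤ t →
      (∀ i, hDC t i = 1) ∧ (haDR t = ![1, 1, 4/5]) ∧
      (∑ i, E0 i * haDR t i) / (∑ i, E0 i) < (∑ i, E0 i * hDC t i) / (∑ i, E0 i) := by
  subst hE0 hAe hAb
  have hl : l = ![![0, 0, 4], ![4/3, 0, 0], ![0, 3/5, 0]] := by
    funext i j
    rw [hlm]
    fin_cases i <;> fin_cases j <;> norm_num
  subst hl
  -- h at time 1
  have A0 : hDC 1 0 = 1 := by rw [hDC1]; norm_num
  have A1 : hDC 1 1 = 2/3 := by rw [hDC1]; norm_num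
  have A2 : hDC 1 2 = 2/5 := by rw [hDC1]; norm_num [Matrix.cons_val_two]
  have B0 : haDR 1 0 = 1 := by rw [haDR1]; norm_num
  have B1 : haDR 1 1 = 2/3 := by rw [haDR1]; norm_num
  have B2 : haDR 1 2 = 2/5 := by rw [haDR1]; norm_num [Matrix.cons_val_two]
  -- DC step t=1: active = {0}
  have c0 : hDC 1 0 = 1 ∧ (∀ t' < 1, hDC t' 0 < 1) := by
    refine ⟨A0, ?_⟩
    intro t' ht'
    interval_cases t'
    rw [hDC0]; norm_num
  have c1 : ¬ (hDC 1 1 = 1 ∧ (∀ t' < 1, hDC t' 1 < 1)) := by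
    rintro ⟨h, -⟩; rw [A1] at h; norm_num at h
  have c2 : ¬ (hDC 1 2 = 1 ∧ (∀ t' < 1, hDC t' 2 < 1)) := by
    rintro ⟨h, -⟩; rw [A2] at h; norm_num at h
  have D0 : hDC 2 0 = 1 := by
    rw [hDCupd 1 le_rfl, Fin.sum_univ_three, if_pos c0, if_neg c1, if_neg c2, A0]
    norm_num
  have D1 : hDC 2 1 = 1 := by
    rw [hDCupd 1 le_rfl, Fin.sum_univ_three, if_pos c0, if_neg c1, if_neg c2, A0, A1]
    norm_num
  have D2 : hDC 2 2 = 2/5 := by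
    rw [hDCupd 1 le_rfl, Fin.sum_univ_three, if_pos c0, if_neg c1, if_neg c2, A0, A2]
    norm_num [Matrix.cons_val_two]
  -- DC step t=2: active = {1}
  have d0 : ¬ (hDC 2 0 = 1 ∧ (∀ t' < 2, hDC t' 0 < 1)) := by
    rintro ⟨-, h⟩
    have := h 1 (by norm_num)
    rw [A0] at this; norm_num at this
  have d1 : hDC 2 1 = 1 ∧ (∀ t' < 2, hDC t' 1 < 1) := by
    refine ⟨D1, ?_⟩
    intro t' ht'
    interval_cases t' <;> simp [hDC0, A1] <;> norm_num
  have d2 : ¬ (hDC 2 2 = 1 ∧ (∀ t' < 2, hDC t' 2 < 1)) := by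
    rintro ⟨h, -⟩; rw [D2] at h; norm_num at h
  have F0 : hDC 3 0 = 1 := by
    rw [hDCupd 2 (by norm_num), Fin.sum_univ_three, if_neg d0, if_pos d1, if_neg d2, D0, D1]
    norm_num
  have F1 : hDC 3 1 = 1 := by
    rw [hDCupd 2 (by norm_num), Fin.sum_univ_three, if_neg d0, if_pos d1, if_neg d2, D1]
    norm_num
  have F2 : hDC 3 2 = 1 := by
    rw [hDCupd 2 (by norm_num), Fin.sum_univ_three, if_neg d0, if_pos d1, if_neg d2, D1, D2]
    norm_num [Matrix.cons_val_two]
  have F : ∀ i, hDC 3 i = 1 := by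
    intro i; fin_cases i <;> assumption
  -- l nonneg
  have hlnn : ∀ i j : Fin 3, (0:ℝ) ≤ ![![(0:ℝ), 0, 4], ![4/3, 0, 0], ![0, 3/5, 0]] i j := by
    intro i j; fin_cases i <;> fin_cases j <;> norm_num
  -- DC stays at 1 from time 3 on
  have DCall : ∀ k, ∀ i, hDC (3 + k) i = 1 := by
    intro k
    induction k with
    | zero => exact F
    | succ n ih =>
      intro i
      have h3n : (3 + (n + 1)) = (3 + n) + 1 := by ring
      rw [h3n, hDCupd (3 + n) (by omega)]
      have hsumnn : (0:ℝ) ≤ ∑ j, if hDC (3+n) j = 1 ∧ (∀ t' < 3+n, hDC t' j < 1)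
          then ![![(0:ℝ), 0, 4], ![4/3, 0, 0], ![0, 3/5, 0]] i j * hDC (3+n) j else 0 := by
        apply Finset.sum_nonneg
        intro j _
        split
        · rw [ih j]; simpa using hlnn i j
        · exact le_rfl
      rw [ih i]
      rw [min_eq_left (by linarith)]
  -- aDR step t=1: all active
  have b0 : 0 < haDR 1 0 ∧ (∀ t' < 1, haDR t' 0 = 0) := by
    refine ⟨by rw [B0]; norm_num, ?_⟩
    intro t' ht'; interval_cases t'; exact haDR0 0
  have b1 : 0 < haDR 1 1 ∧ (∀ t' < 1, haDR t' 1 = 0) := by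
    refine ⟨by rw [B1]; norm_num, ?_⟩
    intro t' ht'; interval_cases t'; exact haDR0 1
  have b2 : 0 < haDR 1 2 ∧ (∀ t' < 1, haDR t' 2 = 0) := by
    refine ⟨by rw [B2]; norm_num, ?_⟩
    intro t' ht'; interval_cases t'; exact haDR0 2
  have G0 : haDR 2 0 = 1 := by
    rw [haDRupd 1 le_rfl, Fin.sum_univ_three, if_pos b0, if_pos b1, if_pos b2, B0, B1, B2]
    norm_num [Matrix.cons_val_two]
  have G1 : haDR 2 1 = 1 := by
    rw [haDRupd 1 le_rfl, Fin.sum_univ_three, if_pos b0, if_pos b1, if_pos b2, B0, B1, B2]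
    norm_num [Matrix.cons_val_two]
  have G2 : haDR 2 2 = 4/5 := by
    rw [haDRupd 1 le_rfl, Fin.sum_univ_three, if_pos b0, if_pos b1, if_pos b2, B0, B1, B2]
    norm_num [Matrix.vecHead, Matrix.vecTail, Matrix.cons_val_two]
  -- aDR stays constant from time 2 on
  have aDRall : ∀ k, haDR (2 + k) = ![1, 1, 4/5] := by
    intro k
    induction k with
    | zero =>
      funext i; fin_cases i <;> simp [G0, G1, G2] <;> norm_num
    | succ n ih =>
      funext i
      have h2n : (2 + (n + 1)) = (2 + n) + 1 := by ring
      rw [h2n, haDRupd (2 + n) (by omega)]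
      have Bpos : ∀ j : Fin 3, haDR 1 j ≠ 0 := by
        intro j
        fin_cases j
        · show haDR 1 0 ≠ 0; rw [B0]; norm_num
        · show haDR 1 1 ≠ 0; rw [B1]; norm_num
        · show haDR 1 2 ≠ 0; rw [B2]; norm_num
      have hz : ∀ j : Fin 3, ¬ (0 < haDR (2+n) j ∧ (∀ t' < 2+n, haDR t' j = 0)) := by
        intro j hcon
        exact Bpos j (hcon.2 1 (by omega))
      rw [Fin.sum_univ_three, if_neg (hz 0), if_neg (hz 1), if_neg (hz 2)]
      rw [ih]
      fin_cases i <;> simp <;> norm_num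
  refine ⟨3, by norm_num, ?_⟩
  intro t ht
  obtain ⟨k, rfl⟩ := Nat.exists_eq_add_of_le ht
  have hdc := DCall k
  have hadr : haDR (3 + k) = ![1, 1, 4/5] := by
    have : 3 + k = 2 + (1 + k) := by ring
    rw [this]; exact aDRall (1 + k)
  refine ⟨hdc, hadr, ?_⟩
  rw [hadr]
  rw [Fin.sum_univ_three, Fin.sum_univ_three, Fin.sum_univ_three,
    hdc 0, hdc 1, hdc 2]
  norm_num [Matrix.cons_val_two]
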